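/- arXiv:math/0501514 — 3 statements merged into one kernel-verified Lean document; each statement's English description precedes it below -/
import Mathlib

section
/- If the first Hochschild cohomology group H¹_k(R, End(M)) vanishes, then M is rigid: every formal deformation of M is equivalent to the trivial deformation ξ. -/
open PowerSeries Finset

/-- If H¹_k(R, End(M)) = 0 (every Hochschild 1-cocycle is a
1-coboundary), then M is rigid: every formal deformation of M is equivalent to the
trivial deformation ξ. -/
theorem rigid_of_H1_vanishes
    {k R M : Type*} [CommRing k] [Ring R] [Algebra k R]
    [AddCommGroup M] [Module k M]
    (ξ : R →ₐ[k] Module.End k M)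
    (hH1 : ∀ f : R →ₗ[k] Module.End k M,
      (∀ r s : R, ξ r * f s - f (r * s) + f r * ξ s = 0) →
      ∃ φ : Module.End k M, ∀ r : R, f r = ξ r * φ - φ * ξ r) :
    ∀ D : ℕ → (R →ₗ[k] Module.End k M),
      D 0 = ξ.toLinearMap →
      (∀ (n : ℕ) (r s : R),
        D n (r * s) = ∑ p ∈ Finset.HasAntidiagonal.antidiagonal n, D p.1 r * D p.2 s) →
      ∃ Φ : ℕ → Module.End k M, Φ 0 = 1 ∧
        ∀ r : R,
          PowerSeries.mk Φ * PowerSeries.C (R := Module.End k M) (ξ r) =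
            PowerSeries.mk (fun n => D n r) * PowerSeries.mk Φ := by
  intro D hD0 hmul
  classical
  set A := Module.End k M with hA
  -- the deformation, packaged as a power-series valued map
  let d : R → A⟦X⟧ := fun r => PowerSeries.mk fun n => D n r
  have hd0 : ∀ r : R, (coeff (R := A) 0) (d r) = ξ r := by
    intro r; simp [d, coeff_mk, hD0]
  have hdmul : ∀ r s : R, d (r * s) = d r * d s := by
    intro r s
    refine PowerSeries.ext fun n => ?_
    rw [coeff_mul]
    simp only [d, coeff_mk]
    exact hmul n r s
  -- linear-map packaging
  let dlin : R →ₗ[k] A⟦X⟧ :=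
    { toFun := d
      map_add' := by
        intro r s
        refine PowerSeries.ext fun n => ?_
        simp [d, coeff_mk]
      map_smul' := by
        intro c r
        refine PowerSeries.ext fun n => ?_
        simp [d, coeff_mk, coeff_smul]
      }
  let Cl : A →ₗ[k] A⟦X⟧ :=
    { toFun := C (R := A)
      map_add' := by intro a b; exact map_add _ _ _
      map_smul' := by
        intro c a; ext n
        simp only [coeff_smul, coeff_C, RingHom.id_apply]
        split <;> simp
      }
  let coeffl : ℕ → (A⟦X⟧ →ₗ[k] A) := fun n =>
    { toFun := coeff (R := A) n
      map_add' := fun _ _ => map_add _ _ _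
      map_smul' := fun c f => coeff_smul n f c }
  let elin : ℕ → A⟦X⟧ → (R →ₗ[k] A) := fun n ψ =>
    (coeffl n).comp
      ((LinearMap.mulRight k ψ).comp dlin -
        (LinearMap.mulLeft k ψ).comp (Cl.comp ξ.toLinearMap))
  have helin : ∀ (n : ℕ) (ψ : A⟦X⟧) (r : R),
      elin n ψ r = coeff (R := A) n (d r * ψ - ψ * C (R := A) (ξ r)) := by
    intro n ψ r
    simp [elin, coeffl, Cl, dlin, LinearMap.mulRight_apply, LinearMap.mulLeft_apply]
  -- a choice function for coboundaries
  let pick : (R →ₗ[k] A) → A := fun f =>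
    if hc : ∀ r s : R, ξ r * f s - f (r * s) + f r * ξ s = 0 then
      Classical.choose (hH1 f hc) else 0
  have pick_spec : ∀ (f : R →ₗ[k] A)
      (hc : ∀ r s : R, ξ r * f s - f (r * s) + f r * ξ s = 0),
      ∀ r : R, f r = ξ r * pick f - pick f * ξ r := by
    intro f hc r
    simp only [pick, dif_pos hc]
    exact Classical.choose_spec (hH1 f hc) r
  -- the recursive construction
  let next : ℕ → A⟦X⟧ → A := fun n ψ => if n = 0 then 1 else - pick (elin n ψ)
  let ψs : ℕ → A⟦X⟧ := fun n => Nat.rec 0 (fun m ψ => ψ + monomial (R := A) m (next m ψ)) n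
  let Φ : ℕ → A := fun n => next n (ψs n)
  have hψsucc : ∀ n : ℕ, ψs (n + 1) = ψs n + monomial (R := A) n (Φ n) := fun n => rfl
  -- auxiliary coefficient computations with monomials
  have hmulmono_lt : ∀ (f : A⟦X⟧) (n : ℕ) (a : A) (m : ℕ), m < n →
      coeff (R := A) m (f * monomial (R := A) n a) = 0 := by
    intro f n a m hm
    rw [coeff_mul]
    apply Finset.sum_eq_zero
    intro p hp
    have := Finset.HasAntidiagonal.mem_antidiagonal.mp hp
    rw [coeff_monomial, if_neg (by omega), mul_zero]
  have hmonomul_lt : ∀ (n : ℕ) (a : A) (f : A⟦X⟧) (m : ℕ), m < n →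
      coeff (R := A) m (monomial (R := A) n a * f) = 0 := by
    intro n a f m hm
    rw [coeff_mul]
    apply Finset.sum_eq_zero
    intro p hp
    have := Finset.HasAntidiagonal.mem_antidiagonal.mp hp
    rw [coeff_monomial, if_neg (by omega), zero_mul]
  have hmulmono_eq : ∀ (f : A⟦X⟧) (n : ℕ) (a : A),
      coeff (R := A) n (f * monomial (R := A) n a) = coeff (R := A) 0 f * a := by
    intro f n a
    rw [coeff_mul]
    rw [Finset.sum_eq_single ((0 : ℕ), n)]
    · rw [coeff_monomial, if_pos rfl]
    · intro p hp hne
      have h1 := Finset.HasAntidiagonal.mem_antidiagonal.mp hp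
      rw [coeff_monomial, if_neg, mul_zero]
      intro h2
      exact hne (by ext <;> simp <;> omega)
    · intro h
      exact absurd (Finset.HasAntidiagonal.mem_antidiagonal.mpr (by simp)) h
  have hmonomul_eq : ∀ (n : ℕ) (a : A) (f : A⟦X⟧),
      coeff (R := A) n (monomial (R := A) n a * f) = a * coeff (R := A) 0 f := by
    intro n a f
    rw [coeff_mul]
    rw [Finset.sum_eq_single ((n : ℕ), 0)]
    · rw [coeff_monomial, if_pos rfl]
    · intro p hp hne
      have h1 := Finset.HasAntidiagonal.mem_antidiagonal.mp hp
      rw [coeff_monomial, if_neg, zero_mul]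
      intro h2
      exact hne (by ext <;> simp <;> omega)
    · intro h
      exact absurd (Finset.HasAntidiagonal.mem_antidiagonal.mpr (by simp)) h
  -- low coefficients of ψs
  have hcoeff0 : ∀ n m : ℕ, n ≤ m → coeff (R := A) m (ψs n) = 0 := by
    intro n
    induction n with
    | zero => intro m _; simp [ψs]
    | succ n ih =>
      intro m hm
      rw [hψsucc, map_add, ih m (by omega), coeff_monomial, if_neg (by omega), add_zero]
  have hcoeff : ∀ n m : ℕ, m < n → coeff (R := A) m (ψs n) = Φ m := by
    intro n
    induction n with
    | zero => intro m hm; exact absurd hm (Nat.not_lt_zero m)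
    | succ n ih =>
      intro m hm
      rw [hψsucc, map_add, coeff_monomial]
      rcases Nat.lt_succ_iff_lt_or_eq.mp hm with h | h
      · rw [if_neg (by omega), add_zero, ih m h]
      · subst h
        rw [if_pos rfl, hcoeff0 _ _ le_rfl, zero_add]
  -- the key invariant
  have hinv : ∀ (n : ℕ) (r : R) (m : ℕ), m < n →
      coeff (R := A) m (d r * ψs n - ψs n * C (R := A) (ξ r)) = 0 := by
    intro n
    induction n with
    | zero => intro r m hm; exact absurd hm (Nat.not_lt_zero m)
    | succ n ih =>
      intro r m hm
      have expand : d r * ψs (n+1) - ψs (n+1) * C (R := A) (ξ r)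
          = (d r * ψs n - ψs n * C (R := A) (ξ r))
            + (d r * monomial (R := A) n (Φ n) - monomial (R := A) n (Φ n) * C (R := A) (ξ r)) := by
        rw [hψsucc]; noncomm_ring
      rcases Nat.lt_succ_iff_lt_or_eq.mp hm with h | h
      · have e2 : coeff (R := A) m (d r * monomial (R := A) n (Φ n) - monomial (R := A) n (Φ n) * C (R := A) (ξ r)) = 0 := by
          rw [map_sub, hmulmono_lt _ _ _ _ h, hmonomul_lt _ _ _ _ h, sub_zero]
        rw [expand, map_add, e2, ih r m h, add_zero]
      · subst h
        have e2 : coeff (R := A) m (d r * monomial (R := A) m (Φ m) - monomial (R := A) m (Φ m) * C (R := A) (ξ r))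
            = ξ r * Φ m - Φ m * ξ r := by
          rw [map_sub, hmulmono_eq, hmonomul_eq, hd0, coeff_zero_C]
        rw [expand, map_add, e2]
        -- goal : coeff m (G r) + (ξ r * Φ m - Φ m * ξ r) = 0
        by_cases hn : m = 0
        · subst hn
          have hψ0 : ψs 0 = 0 := rfl
          have hΦ0 : Φ 0 = 1 := by simp [Φ, next]
          rw [hψ0, hΦ0]
          simp
        · -- the obstruction is a cocycle
          have hc : ∀ r s : R, ξ r * elin m (ψs m) s - elin m (ψs m) (r * s)
              + elin m (ψs m) r * ξ s = 0 := by
            intro r s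
            have hGid : C (R := A) (ξ r) * (d s * ψs m - ψs m * C (R := A) (ξ s))
                - (d (r*s) * ψs m - ψs m * C (R := A) (ξ (r*s)))
                + (d r * ψs m - ψs m * C (R := A) (ξ r)) * C (R := A) (ξ s)
                = (C (R := A) (ξ r) - d r) * (d s * ψs m - ψs m * C (R := A) (ξ s)) := by
              rw [hdmul, map_mul ξ r s, map_mul (C (R := A))]
              simp only [mul_sub, sub_mul, mul_assoc]; abel
            rw [helin, helin, helin, ← coeff_C_mul, ← coeff_mul_C, ← map_sub, ← map_add,
              hGid, coeff_mul]
            apply Finset.sum_eq_zero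
            intro p hp
            have hps := Finset.HasAntidiagonal.mem_antidiagonal.mp hp
            by_cases h1 : p.1 = 0
            · rw [h1, map_sub, coeff_zero_C, hd0, sub_self, zero_mul]
            · rw [ih s p.2 (by omega), mul_zero]
          have hΦ : Φ m = - pick (elin m (ψs m)) := by simp [Φ, next, hn]
          have hsp := pick_spec _ hc r
          rw [helin] at hsp
          rw [hΦ, hsp]
          have e : ∀ x y : A, -x * y = -(x * y) := fun x y => neg_mul x y; simp only [mul_neg, e]; abel
  -- conclusion
  refine ⟨Φ, by simp [Φ, next], ?_⟩
  intro r
  refine PowerSeries.ext fun n => ?_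
  have h := hinv (n+1) r n (lt_add_one n)
  rw [map_sub, sub_eq_zero] at h
  calc coeff (R := A) n (PowerSeries.mk Φ * C (R := A) (ξ r))
      = Φ n * ξ r := by rw [coeff_mul_C, coeff_mk]
    _ = coeff (R := A) n (ψs (n+1)) * ξ r := congrArg (· * ξ r) (hcoeff (n+1) n (lt_add_one n)).symm
    _ = coeff (R := A) n (ψs (n+1) * C (R := A) (ξ r)) := (coeff_mul_C _ _ _).symm
    _ = coeff (R := A) n (d r * ψs (n+1)) := h.symm
    _ = ∑ p ∈ Finset.HasAntidiagonal.antidiagonal n, D p.1 r * coeff (R := A) p.2 (ψs (n+1)) := by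
        rw [coeff_mul]; simp [d, coeff_mk]
    _ = ∑ p ∈ Finset.HasAntidiagonal.antidiagonal n, D p.1 r * Φ p.2 := by
        refine Finset.sum_congr rfl fun p hp => ?_
        have := Finset.HasAntidiagonal.mem_antidiagonal.mp hp
        exact congrArg (D p.1 r * ·) (hcoeff (n+1) p.2 (by omega))
    _ = coeff (R := A) n (PowerSeries.mk (fun n => D n r) * PowerSeries.mk Φ) := by
        rw [coeff_mul]; simp [coeff_mk]
end

section
/- Let ξ_t = ξ + tξ₁ + ⋯ + t^m ξ_m be an approximate deformation of M of order m. Then the map Obs(ξ_t) : R ⊗ R → End(M) given by Obs(ξ_t)(a⊗b) = Σ_{i=1}^m ξᵢ(a) ξ_{m+1−i}(b) is a Hochschild 2-cocycle: ξ(a)Obs(b⊗c) − Obs(ab⊗c) + Obs(a⊗bc) − Obs(a⊗b)ξ(c) = 0 for all a,b,c ∈ R. -/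
open Finset

/-- The obstruction Obs(ξ_t)(a⊗b) = Σ_{i=1}^m ξᵢ(a)ξ_{m+1−i}(b) of an
order-m approximate deformation is a Hochschild 2-cocycle. -/
theorem obstruction_is_two_cocycle
    {k R M : Type*} [CommRing k] [Ring R] [Algebra k R]
    [AddCommGroup M] [Module k M]
    (ξ : R →ₐ[k] Module.End k M) (m : ℕ)
    (D : ℕ → (R →ₗ[k] Module.End k M))
    (hD0 : D 0 = ξ.toLinearMap)
    (hmul : ∀ n ≤ m, ∀ r s : R,
      D n (r * s) = ∑ p ∈ Finset.HasAntidiagonal.antidiagonal n, D p.1 r * D p.2 s) :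
    ∀ a b c : R,
      ξ a * (∑ i ∈ Finset.Icc 1 m, D i b * D (m + 1 - i) c)
        - (∑ i ∈ Finset.Icc 1 m, D i (a * b) * D (m + 1 - i) c)
        + (∑ i ∈ Finset.Icc 1 m, D i a * D (m + 1 - i) (b * c))
        - (∑ i ∈ Finset.Icc 1 m, D i a * D (m + 1 - i) b) * ξ c = 0 := by
  intro a b c
  have hξ : ∀ r : R, ξ r = D 0 r := by intro r; rw [hD0]; rfl
  have h1 : ∀ n : ℕ, (Finset.HasAntidiagonal.antidiagonal n).filter (fun p => p.1 = 0) = {((0 : ℕ), n)} := by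
    intro n; ext ⟨p, q⟩
    simp only [Finset.mem_filter, Finset.HasAntidiagonal.mem_antidiagonal, Finset.mem_singleton,
      Prod.mk.injEq]
    omega
  have h2 : ∀ n : ℕ, (Finset.HasAntidiagonal.antidiagonal n).filter (fun p => p.2 = 0) = {(n, (0 : ℕ))} := by
    intro n; ext ⟨p, q⟩
    simp only [Finset.mem_filter, Finset.HasAntidiagonal.mem_antidiagonal, Finset.mem_singleton,
      Prod.mk.injEq]
    omega
  -- Expand term 2
  have e2 : (∑ i ∈ Finset.Icc 1 m, D i (a * b) * D (m + 1 - i) c)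
      = (∑ i ∈ Finset.Icc 1 m, D 0 a * D i b * D (m + 1 - i) c)
        + ∑ i ∈ Finset.Icc 1 m, ∑ x ∈ (Finset.HasAntidiagonal.antidiagonal i).filter (fun p => ¬ p.1 = 0),
            D x.1 a * D x.2 b * D (m + 1 - i) c := by
    rw [← Finset.sum_add_distrib]
    refine Finset.sum_congr rfl fun i hi => ?_
    simp only [Finset.mem_Icc] at hi
    rw [hmul i (by omega) a b, Finset.sum_mul,
      ← Finset.sum_filter_add_sum_filter_not (Finset.HasAntidiagonal.antidiagonal i) (fun p => p.1 = 0), h1]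
    simp
  -- Expand term 3
  have e3 : (∑ i ∈ Finset.Icc 1 m, D i a * D (m + 1 - i) (b * c))
      = (∑ i ∈ Finset.Icc 1 m, D i a * (D (m + 1 - i) b * D 0 c))
        + ∑ i ∈ Finset.Icc 1 m,
            ∑ y ∈ (Finset.HasAntidiagonal.antidiagonal (m + 1 - i)).filter (fun p => ¬ p.2 = 0),
            D i a * (D y.1 b * D y.2 c) := by
    rw [← Finset.sum_add_distrib]
    refine Finset.sum_congr rfl fun i hi => ?_
    simp only [Finset.mem_Icc] at hi
    rw [hmul (m + 1 - i) (by omega) b c, Finset.mul_sum,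
      ← Finset.sum_filter_add_sum_filter_not (Finset.HasAntidiagonal.antidiagonal (m + 1 - i))
        (fun p => p.2 = 0), h2]
    simp
  -- The two leftover double sums coincide (reindexing over triples p+q+r = m+1).
  have key : (∑ i ∈ Finset.Icc 1 m, ∑ x ∈ (Finset.HasAntidiagonal.antidiagonal i).filter (fun p => ¬ p.1 = 0),
          D x.1 a * D x.2 b * D (m + 1 - i) c)
      = ∑ i ∈ Finset.Icc 1 m,
          ∑ y ∈ (Finset.HasAntidiagonal.antidiagonal (m + 1 - i)).filter (fun p => ¬ p.2 = 0),
          D i a * (D y.1 b * D y.2 c) := by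
    rw [Finset.sum_sigma', Finset.sum_sigma']
    refine Finset.sum_nbij' (fun t => ⟨t.2.1, (t.2.2, m + 1 - t.1)⟩)
      (fun t => ⟨t.1 + t.2.1, (t.1, t.2.1)⟩) ?_ ?_ ?_ ?_ ?_
    · rintro ⟨i, p, q⟩ ht
      dsimp only
      simp only [Finset.mem_sigma, Finset.mem_Icc, Finset.mem_filter,
        Finset.HasAntidiagonal.mem_antidiagonal] at ht ⊢
      omega
    · rintro ⟨i, q, r⟩ ht
      dsimp only
      simp only [Finset.mem_sigma, Finset.mem_Icc, Finset.mem_filter,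
        Finset.HasAntidiagonal.mem_antidiagonal] at ht ⊢
      exact ⟨by omega, trivial, by omega⟩
    · rintro ⟨i, p, q⟩ ht
      simp only [Finset.mem_sigma, Finset.mem_Icc, Finset.mem_filter,
        Finset.HasAntidiagonal.mem_antidiagonal] at ht
      have hpq : p + q = i := ht.2.1
      subst hpq
      rfl
    · rintro ⟨i, q, r⟩ ht
      simp only [Finset.mem_sigma, Finset.mem_Icc, Finset.mem_filter,
        Finset.HasAntidiagonal.mem_antidiagonal] at ht
      dsimp only
      rw [show m + 1 - (i + q) = r by omega]
    · rintro ⟨i, p, q⟩ ht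
      simp only [Finset.mem_sigma, Finset.mem_Icc, Finset.mem_filter,
        Finset.HasAntidiagonal.mem_antidiagonal] at ht
      have hpq : p + q = i := ht.2.1
      subst hpq
      dsimp only
      rw [mul_assoc]
  rw [e2, e3, key, hξ a, hξ c, Finset.mul_sum, Finset.sum_mul]
  simp only [mul_assoc]
  abel
end

section
/- If the second Hochschild cohomology group H²_k(R, End(M)) vanishes, then every approximate deformation of M of order m (m ≥ 1) extends to a full formal deformation of M. -/
open Finset

section Aux

lemma sum_antidiagonal_split {β : Type*} [AddCommMonoid β] {n : ℕ} (hn : 1 ≤ n) (f : ℕ × ℕ → β) :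
    ∑ p ∈ Finset.HasAntidiagonal.antidiagonal n, f p
      = f (0, n) + f (n, 0) +
        ∑ p ∈ (Finset.HasAntidiagonal.antidiagonal n).filter (fun p => p.1 ≠ 0 ∧ p.2 ≠ 0), f p := by
  classical
  rw [← Finset.sum_filter_add_sum_filter_not (Finset.HasAntidiagonal.antidiagonal n)
    (fun p => p.1 ≠ 0 ∧ p.2 ≠ 0) f]
  have h2 : (Finset.HasAntidiagonal.antidiagonal n).filter (fun p => ¬(p.1 ≠ 0 ∧ p.2 ≠ 0))
      = {(0, n), (n, 0)} := by
    ext p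
    simp only [Finset.mem_filter, Finset.HasAntidiagonal.mem_antidiagonal, Finset.mem_insert,
      Finset.mem_singleton, not_and_or, not_ne_iff, Prod.ext_iff]
    constructor
    · rintro ⟨hp, h | h⟩
      · left; omega
      · right; omega
    · rintro (⟨h1, h2⟩ | ⟨h1, h2⟩) <;> omega
  have hne : ((0 : ℕ), n) ≠ (n, 0) := by
    simp [Prod.ext_iff]; omega
  rw [h2, Finset.sum_insert (by simp [hne]), Finset.sum_singleton]
  abel

variable {k R M : Type*} [CommRing k] [Ring R] [Algebra k R]
    [AddCommGroup M] [Module k M]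

noncomputable def obsB (g : ℕ → (R →ₗ[k] Module.End k M)) (n : ℕ) :
    R →ₗ[k] R →ₗ[k] Module.End k M :=
  LinearMap.mk₂ k
    (fun a b => ∑ p ∈ (Finset.HasAntidiagonal.antidiagonal n).filter (fun p => p.1 ≠ 0 ∧ p.2 ≠ 0),
      g p.1 a * g p.2 b)
    (fun a a' b => by simp [map_add, add_mul, Finset.sum_add_distrib])
    (fun c a b => by simp [map_smul, smul_mul_assoc, Finset.smul_sum])
    (fun a b b' => by simp [map_add, mul_add, Finset.sum_add_distrib])
    (fun c a b => by simp [map_smul, mul_smul_comm, Finset.smul_sum])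

lemma obsB_apply (g : ℕ → (R →ₗ[k] Module.End k M)) (n : ℕ) (a b : R) :
    obsB g n a b = ∑ p ∈ (Finset.HasAntidiagonal.antidiagonal n).filter (fun p => p.1 ≠ 0 ∧ p.2 ≠ 0),
      g p.1 a * g p.2 b := rfl

lemma obsB_congr (g g' : ℕ → (R →ₗ[k] Module.End k M)) (n : ℕ)
    (h : ∀ i < n, g i = g' i) : obsB g n = obsB g' n := by
  refine LinearMap.ext fun a => LinearMap.ext fun b => ?_
  simp only [obsB_apply]
  refine Finset.sum_congr rfl fun p hp => ?_
  simp only [Finset.mem_filter, Finset.HasAntidiagonal.mem_antidiagonal] at hp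
  rw [h p.1 (by omega), h p.2 (by omega)]


open Classical in
noncomputable def pick (ξ : R →ₐ[k] Module.End k M)
    (hH2 : ∀ B : R →ₗ[k] R →ₗ[k] Module.End k M,
      (∀ a b c : R,
        ξ a * B b c - B (a * b) c + B a (b * c) - B a b * ξ c = 0) →
      ∃ f : R →ₗ[k] Module.End k M, ∀ a b : R,
        B a b = ξ a * f b - f (a * b) + f a * ξ b)
    (B : R →ₗ[k] R →ₗ[k] Module.End k M) : R →ₗ[k] Module.End k M :=
  if h : ∀ a b c : R,
      ξ a * B b c - B (a * b) c + B a (b * c) - B a b * ξ c = 0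
  then Classical.choose (hH2 B h) else 0

variable (ξ : R →ₐ[k] Module.End k M)
    (hH2 : ∀ B : R →ₗ[k] R →ₗ[k] Module.End k M,
      (∀ a b c : R,
        ξ a * B b c - B (a * b) c + B a (b * c) - B a b * ξ c = 0) →
      ∃ f : R →ₗ[k] Module.End k M, ∀ a b : R,
        B a b = ξ a * f b - f (a * b) + f a * ξ b)
    (D : ℕ → (R →ₗ[k] Module.End k M)) (m : ℕ)

noncomputable def buildAux : ℕ → ℕ → (R →ₗ[k] Module.End k M)
  | 0 => fun j => if j = 0 then D 0 else 0
  | (n + 1) => fun j =>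
      if j = n + 1 then
        (if n + 1 ≤ m then D (n + 1)
          else -(pick ξ hH2 (obsB (buildAux n) (n + 1))))
      else buildAux n j

noncomputable def buildD : ℕ → (R →ₗ[k] Module.End k M) :=
  fun n => buildAux ξ hH2 D m n n

lemma buildAux_agree : ∀ n j, j ≤ n → buildAux ξ hH2 D m n j = buildD ξ hH2 D m j := by
  intro n
  induction n with
  | zero => intro j hj; interval_cases j; rfl
  | succ n ih =>
    intro j hj
    rcases eq_or_lt_of_le hj with rfl | hj'
    · rfl
    · have hjn : j ≤ n := by omega
      rw [buildD]
      show buildAux ξ hH2 D m (n + 1) j = _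
      simp only [buildAux]
      rw [if_neg (by omega)]
      exact ih j hjn

lemma buildD_le (n : ℕ) (hn : n ≤ m) : buildD ξ hH2 D m n = D n := by
  cases n with
  | zero => rfl
  | succ n =>
    rw [buildD]
    simp [buildAux, hn]

lemma buildD_gt (n : ℕ) (hn : ¬(n + 1 ≤ m)) :
    buildD ξ hH2 D m (n + 1)
      = -(pick ξ hH2 (obsB (buildD ξ hH2 D m) (n + 1))) := by
  rw [buildD]
  simp only [buildAux, if_true, eq_self_iff_true]
  rw [if_neg hn]
  congr 1
  congr 1
  exact obsB_congr _ _ _ (fun i hi => buildAux_agree ξ hH2 D m n i (by omega))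

end Aux

/-- If H²_k(R, End(M)) = 0 (every Hochschild 2-cocycle is a
2-coboundary), then every approximate deformation of order m ≥ 1 extends to a full
formal deformation. -/
theorem approximate_extends_of_H2_vanishes
    {k R M : Type*} [CommRing k] [Ring R] [Algebra k R]
    [AddCommGroup M] [Module k M]
    (ξ : R →ₐ[k] Module.End k M)
    (hH2 : ∀ B : R →ₗ[k] R →ₗ[k] Module.End k M,
      (∀ a b c : R,
        ξ a * B b c - B (a * b) c + B a (b * c) - B a b * ξ c = 0) →
      ∃ f : R →ₗ[k] Module.End k M, ∀ a b : R,
        B a b = ξ a * f b - f (a * b) + f a * ξ b) :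
    ∀ (m : ℕ), 1 ≤ m →
      ∀ D : ℕ → (R →ₗ[k] Module.End k M),
        D 0 = ξ.toLinearMap →
        (∀ n ≤ m, ∀ r s : R,
          D n (r * s) = ∑ p ∈ Finset.HasAntidiagonal.antidiagonal n, D p.1 r * D p.2 s) →
        ∃ D' : ℕ → (R →ₗ[k] Module.End k M),
          (∀ i ≤ m, D' i = D i) ∧
          D' 0 = ξ.toLinearMap ∧
          (∀ (n : ℕ) (r s : R),
            D' n (r * s) = ∑ p ∈ Finset.HasAntidiagonal.antidiagonal n, D' p.1 r * D' p.2 s) := by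
  
  intro m hm D hξ0 hD
  classical
  set D' : ℕ → (R →ₗ[k] Module.End k M) := buildD ξ hH2 D m with hD'def
  have hagree : ∀ i ≤ m, D' i = D i := fun i hi => buildD_le ξ hH2 D m i hi
  have h0 : D' 0 = ξ.toLinearMap := by rw [hagree 0 (by omega), hξ0]
  have h0' : ∀ x : R, D' 0 x = ξ x := by intro x; rw [h0]; rfl
  have key : ∀ n, ∀ r s : R,
      D' n (r * s) = ∑ p ∈ Finset.HasAntidiagonal.antidiagonal n, D' p.1 r * D' p.2 s := by
    intro n
    induction n using Nat.strong_induction_on with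
    | _ n IH =>
      by_cases hn : n ≤ m
      · intro r s
        rw [hagree n hn, hD n hn r s]
        refine Finset.sum_congr rfl fun p hp => ?_
        rw [Finset.HasAntidiagonal.mem_antidiagonal] at hp
        rw [hagree p.1 (by omega), hagree p.2 (by omega)]
      · obtain ⟨n', rfl⟩ : ∃ n', n = n' + 1 := ⟨n - 1, by omega⟩
        have hn1 : 1 ≤ n' + 1 := by omega
        set B : R →ₗ[k] R →ₗ[k] Module.End k M := obsB D' (n' + 1) with hBdef
        have hBapp : ∀ a b : R, B a b
            = ∑ p ∈ (Finset.HasAntidiagonal.antidiagonal (n' + 1)).filter (fun p => p.1 ≠ 0 ∧ p.2 ≠ 0),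
                D' p.1 a * D' p.2 b := by
          intro a b; rw [hBdef, obsB_apply]
        set Ψ : R → PowerSeries (Module.End k M) :=
          fun a => PowerSeries.mk (fun j => if j < n' + 1 then D' j a else 0) with hΨdef
        have hcΨ : ∀ (a : R) (j : ℕ),
            PowerSeries.coeff (R := Module.End k M) j (Ψ a)
              = if j < n' + 1 then D' j a else 0 := by
          intro a j; rw [hΨdef]; exact PowerSeries.coeff_mk j _
        have hA : ∀ (a b : R) (p : ℕ), p < n' + 1 →
            PowerSeries.coeff (R := Module.End k M) p (Ψ a * Ψ b) = D' p (a * b) := by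
          intro a b p hp
          rw [PowerSeries.coeff_mul, IH p hp a b]
          refine Finset.sum_congr rfl fun q hq => ?_
          rw [Finset.HasAntidiagonal.mem_antidiagonal] at hq
          rw [hcΨ, hcΨ, if_pos (by omega), if_pos (by omega)]
        have hBn : ∀ a b : R,
            PowerSeries.coeff (R := Module.End k M) (n' + 1) (Ψ a * Ψ b) = B a b := by
          intro a b
          rw [PowerSeries.coeff_mul, sum_antidiagonal_split hn1, hBapp]
          simp only [hcΨ]
          rw [if_neg (lt_irrefl _), mul_zero, if_neg (lt_irrefl _), zero_mul,
            zero_add, zero_add]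
          refine Finset.sum_congr rfl fun p hp => ?_
          simp only [Finset.mem_filter, Finset.HasAntidiagonal.mem_antidiagonal] at hp
          rw [if_pos (by omega), if_pos (by omega)]
        have hcoc : ∀ a b c : R,
            ξ a * B b c - B (a * b) c + B a (b * c) - B a b * ξ c = 0 := by
          intro a b c
          have h1 : PowerSeries.coeff (R := Module.End k M) (n' + 1) (Ψ a * (Ψ b * Ψ c))
              = ξ a * B b c + B a (b * c) := by
            rw [PowerSeries.coeff_mul, sum_antidiagonal_split hn1]
            simp only [hcΨ]
            rw [if_pos (Nat.succ_pos n'), if_neg (lt_irrefl _), zero_mul, add_zero,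
              h0' a, hBn b c]
            congr 1
            rw [hBapp]
            refine Finset.sum_congr rfl fun p hp => ?_
            simp only [Finset.mem_filter, Finset.HasAntidiagonal.mem_antidiagonal] at hp
            rw [if_pos (by omega), hA b c p.2 (by omega)]
          have h2 : PowerSeries.coeff (R := Module.End k M) (n' + 1) ((Ψ a * Ψ b) * Ψ c)
              = B a b * ξ c + B (a * b) c := by
            rw [PowerSeries.coeff_mul, sum_antidiagonal_split hn1]
            simp only [hcΨ]
            rw [if_neg (lt_irrefl _), mul_zero, if_pos (Nat.succ_pos n'), zero_add,
              h0' c, hBn a b]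
            congr 1
            rw [hBapp]
            refine Finset.sum_congr rfl fun p hp => ?_
            simp only [Finset.mem_filter, Finset.HasAntidiagonal.mem_antidiagonal] at hp
            rw [if_pos (by omega), hA a b p.1 (by omega)]
          have h3 := congrArg (PowerSeries.coeff (R := Module.End k M) (n' + 1))
            (mul_assoc (Ψ a) (Ψ b) (Ψ c))
          rw [h2, h1] at h3
          have h4 : ξ a * B b c - B (a * b) c + B a (b * c) - B a b * ξ c
              = (ξ a * B b c + B a (b * c)) - (B a b * ξ c + B (a * b) c) := by abel
          rw [h4, ← h3, sub_self]
        have hDn : D' (n' + 1) = -(pick ξ hH2 B) := by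
          rw [hBdef, hD'def]
          exact buildD_gt ξ hH2 D m n' hn
        have hpick : pick ξ hH2 B = Classical.choose (hH2 B hcoc) := dif_pos hcoc
        have hf := Classical.choose_spec (hH2 B hcoc)
        set f := Classical.choose (hH2 B hcoc) with hfdef
        intro r s
        rw [sum_antidiagonal_split hn1]
        have hfil : ∑ p ∈ (Finset.HasAntidiagonal.antidiagonal (n' + 1)).filter
              (fun p => p.1 ≠ 0 ∧ p.2 ≠ 0), D' p.1 r * D' p.2 s = B r s :=
          (hBapp r s).symm
        rw [hfil, hDn, hpick, h0' r, h0' s, hf r s]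
        simp only [LinearMap.neg_apply, mul_neg, neg_mul]
        abel
  exact ⟨D', hagree, h0, key⟩
end
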